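/- Let β solve W_{2ℓ}^T β = ℓ! e_ℓ where W_{2ℓ} is the Vandermonde matrix at the points 0, −1, …, −(2ℓ−1) and e_ℓ is a standard basis vector. Then every entry of β satisfies |β_i| ≤ (2ℓ)! · (2ℓ)^ℓ. -/
import Mathlib

open Polynomial Finset

/-- Nodes are injective. -/
lemma stmt10_vinj (n : ℕ) : Function.Injective (fun i : Fin n => -(i : ℝ)) := by
  intro a b hab
  simp only [neg_inj, Nat.cast_inj] at hab
  exact Fin.ext hab

/-- The coefficient of `∏_{j ∈ s} (X + C j)` is nonneg and at most `∏ (j+1)`. -/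
lemma stmt10_coeff_bound {n : ℕ} (s : Finset (Fin n)) (m : ℕ) :
    |(∏ j ∈ s, ((X : ℝ[X]) + C (j : ℝ))).coeff m| ≤ ∏ j ∈ s, ((j : ℝ) + 1) := by
  by_cases hm : m ≤ s.card
  · rw [Finset.prod_X_add_C_coeff s (fun j : Fin n => ((j : ℕ) : ℝ)) hm]
    have hnn : ∀ t ∈ s.powersetCard (s.card - m), (0 : ℝ) ≤ ∏ j ∈ t, ((j : ℕ) : ℝ) := by
      intro t _
      exact Finset.prod_nonneg fun j _ => by positivity
    rw [abs_of_nonneg (Finset.sum_nonneg hnn)]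
    have key : ∏ j ∈ s, ((j : ℝ) + 1) = ∑ t ∈ s.powerset, ∏ j ∈ t, ((j : ℕ) : ℝ) := by
      rw [Finset.prod_add]
      simp
    rw [key]
    refine Finset.sum_le_sum_of_subset_of_nonneg ?_ ?_
    · intro t ht
      rw [Finset.mem_powersetCard] at ht
      exact Finset.mem_powerset.mpr ht.1
    · intro t ht _
      exact Finset.prod_nonneg fun j _ => by positivity
  · have hdeg : (∏ j ∈ s, ((X : ℝ[X]) + C (j : ℝ))).natDegree < m := by
      have : (∏ j ∈ s, ((X : ℝ[X]) + C (j : ℝ))).natDegree ≤ s.card := by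
        refine le_trans (Polynomial.natDegree_prod_le _ _) ?_
        calc ∑ j ∈ s, ((X : ℝ[X]) + C (j : ℝ)).natDegree
            ≤ ∑ _j ∈ s, 1 := Finset.sum_le_sum fun j _ => le_of_eq (natDegree_X_add_C _)
          _ = s.card := by simp
      omega
    rw [Polynomial.coeff_eq_zero_of_natDegree_lt hdeg, abs_zero]
    exact Finset.prod_nonneg fun j _ => by positivity

/-- If β solves W_{2ℓ}ᵀ β = ℓ! e_ℓ, where W_{2ℓ} is the Vandermonde matrix at the
points 0, −1, …, −(2ℓ−1) and e_ℓ is the standard basis vector (so that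
Σ_i β_i (−i)^j = ℓ!·1{j=ℓ} for 0 ≤ j ≤ 2ℓ−1), then |β_i| ≤ (2ℓ)!·(2ℓ)^ℓ for all i. -/
theorem stmt10 (ℓ : ℕ) (hℓ : 0 < ℓ) (β : Fin (2 * ℓ) → ℝ)
    (hβ : (Matrix.vandermonde (fun i : Fin (2 * ℓ) => -(i : ℝ))).transpose.mulVec β =
      fun j : Fin (2 * ℓ) => if (j : ℕ) = ℓ then (Nat.factorial ℓ : ℝ) else 0) :
    ∀ i, |β i| ≤ (Nat.factorial (2 * ℓ) : ℝ) * (2 * ℓ : ℝ) ^ ℓ := by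
  have hℓn : ℓ < 2 * ℓ := by omega
  set v : Fin (2 * ℓ) → ℝ := fun i => -(i : ℝ) with hv
  have hvinj : Function.Injective v := stmt10_vinj (2 * ℓ)
  -- the explicit solution via Lagrange basis coefficients
  set β₀ : Fin (2 * ℓ) → ℝ :=
    fun k => (Nat.factorial ℓ : ℝ) * (Lagrange.basis Finset.univ v k).coeff ℓ with hβ₀def
  -- β₀ satisfies the same linear system
  have hsys : (Matrix.vandermonde v).transpose.mulVec β₀ =
      fun j : Fin (2 * ℓ) => if (j : ℕ) = ℓ then (Nat.factorial ℓ : ℝ) else 0 := by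
    funext j
    have hinterp : Lagrange.interpolate Finset.univ v (fun k => (v k) ^ (j : ℕ)) =
        (X : ℝ[X]) ^ (j : ℕ) := by
      have hdeg : ((X : ℝ[X]) ^ (j : ℕ)).degree < (Finset.univ : Finset (Fin (2 * ℓ))).card := by
        rw [degree_X_pow, Finset.card_univ, Fintype.card_fin]
        exact_mod_cast j.isLt
      have h0 := Lagrange.eq_interpolate (s := Finset.univ) (v := v)
        (f := (X : ℝ[X]) ^ (j : ℕ)) hvinj.injOn hdeg
      have h2 : (fun i => eval (v i) ((X : ℝ[X]) ^ (j : ℕ))) =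
          fun k => (v k) ^ (j : ℕ) := by funext k; simp
      rw [h2] at h0
      exact h0.symm
    have hcoeff : ((X : ℝ[X]) ^ (j : ℕ)).coeff ℓ = if (j : ℕ) = ℓ then 1 else 0 := by
      rw [coeff_X_pow]
      by_cases h : (j : ℕ) = ℓ
      · simp [h]
      · rw [if_neg (fun hh => h hh.symm), if_neg h]
    calc (Matrix.vandermonde v).transpose.mulVec β₀ j
        = ∑ k, (v k) ^ (j : ℕ) * β₀ k := by
          simp [Matrix.mulVec, Matrix.transpose_apply, Matrix.vandermonde_apply, dotProduct]
      _ = (Nat.factorial ℓ : ℝ) *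
            ∑ k, (C ((v k) ^ (j : ℕ)) * Lagrange.basis Finset.univ v k).coeff ℓ := by
          rw [Finset.mul_sum]
          refine Finset.sum_congr rfl fun k _ => ?_
          rw [coeff_C_mul, hβ₀def]
          ring
      _ = (Nat.factorial ℓ : ℝ) *
            (Lagrange.interpolate Finset.univ v (fun k => (v k) ^ (j : ℕ))).coeff ℓ := by
          rw [Lagrange.interpolate_apply, Polynomial.finset_sum_coeff]
      _ = if (j : ℕ) = ℓ then (Nat.factorial ℓ : ℝ) else 0 := by
          rw [hinterp, hcoeff]
          by_cases h : (j : ℕ) = ℓ <;> simp [h]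
  -- uniqueness: β = β₀
  have hunit : IsUnit (Matrix.vandermonde v).transpose := by
    rw [Matrix.isUnit_iff_isUnit_det, Matrix.det_transpose]
    exact isUnit_iff_ne_zero.mpr (Matrix.det_vandermonde_ne_zero_iff.mpr hvinj)
  have hβeq : β = β₀ :=
    (Matrix.mulVec_injective_iff_isUnit.mpr hunit) (hβ.trans hsys.symm)
  -- bound each entry of β₀
  intro i
  rw [hβeq]
  show |(Nat.factorial ℓ : ℝ) * (Lagrange.basis Finset.univ v i).coeff ℓ| ≤
    (Nat.factorial (2 * ℓ) : ℝ) * (2 * ℓ : ℝ) ^ ℓ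
  -- decompose the Lagrange basis polynomial
  have hbasis : Lagrange.basis Finset.univ v i =
      C (∏ j ∈ Finset.univ.erase i, (v i - v j)⁻¹) *
        ∏ j ∈ Finset.univ.erase i, ((X : ℝ[X]) + C (j : ℝ)) := by
    rw [Lagrange.basis]
    rw [show (fun j => Lagrange.basisDivisor (v i) (v j)) =
        fun j => C ((v i - v j)⁻¹) * ((X : ℝ[X]) + C (j : ℝ)) from ?_]
    · rw [Finset.prod_mul_distrib, map_prod]
    · funext j
      rw [Lagrange.basisDivisor, hv]
      congr 1
      rw [map_neg, sub_neg_eq_add]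
  have hcconst : |∏ j ∈ Finset.univ.erase i, (v i - v j)⁻¹| ≤ 1 := by
    rw [Finset.abs_prod]
    refine Finset.prod_le_one (fun j _ => abs_nonneg _) fun j hj => ?_
    rw [abs_inv]
    rw [Finset.mem_erase] at hj
    have hne : (j : ℕ) ≠ (i : ℕ) := fun h => hj.1 (Fin.ext h)
    have h1 : (1 : ℝ) ≤ |v i - v j| := by
      rw [hv]
      have : -(↑(i : ℕ) : ℝ) - -(↑(j : ℕ) : ℝ) = ((j : ℕ) : ℝ) - ((i : ℕ) : ℝ) := by ring
      rw [this]
      rcases lt_or_gt_of_ne hne with h | h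
      · rw [abs_sub_comm, abs_of_nonneg (by
          have : ((j : ℕ) : ℝ) ≤ ((i : ℕ) : ℝ) := by exact_mod_cast h.le
          linarith)]
        have : ((j : ℕ) : ℝ) + 1 ≤ ((i : ℕ) : ℝ) := by exact_mod_cast h
        linarith
      · rw [abs_of_nonneg (by
          have : ((i : ℕ) : ℝ) ≤ ((j : ℕ) : ℝ) := by exact_mod_cast h.le
          linarith)]
        have : ((i : ℕ) : ℝ) + 1 ≤ ((j : ℕ) : ℝ) := by exact_mod_cast h
        linarith
    exact inv_le_one_of_one_le₀ h1
  have hprodbound : ∏ j ∈ Finset.univ.erase i, ((j : ℝ) + 1) ≤ (Nat.factorial (2 * ℓ) : ℝ) := by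
    have h1 : ∏ j ∈ Finset.univ.erase i, ((j : ℝ) + 1) ≤
        ∏ j ∈ (Finset.univ : Finset (Fin (2 * ℓ))), ((j : ℝ) + 1) := by
      rw [← Finset.prod_erase_mul Finset.univ (fun j : Fin (2 * ℓ) => ((j : ℕ) : ℝ) + 1)
        (Finset.mem_univ i)]
      have h1i : (1 : ℝ) ≤ ((i : ℕ) : ℝ) + 1 := by
        have : (0 : ℝ) ≤ ((i : ℕ) : ℝ) := Nat.cast_nonneg _; linarith
      have hpn : (0 : ℝ) ≤ ∏ j ∈ Finset.univ.erase i, (((j : ℕ) : ℝ) + 1) :=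
        Finset.prod_nonneg fun j _ => by positivity
      nlinarith
    have h2 : ∏ j ∈ (Finset.univ : Finset (Fin (2 * ℓ))), ((j : ℝ) + 1) = (Nat.factorial (2 * ℓ) : ℝ) := by
      rw [Fin.prod_univ_eq_prod_range (fun k => ((k : ℝ) + 1))]
      rw [← Finset.prod_range_add_one_eq_factorial (2 * ℓ)]
      push_cast
      rfl
    linarith
  have hcoeffb := stmt10_coeff_bound (Finset.univ.erase i) ℓ
  -- put everything together
  rw [hbasis, coeff_C_mul, abs_mul, abs_mul]
  have hfacℓ : (Nat.factorial ℓ : ℝ) ≤ (2 * ℓ : ℝ) ^ ℓ := by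
    have h1 : Nat.factorial ℓ ≤ ℓ ^ ℓ := Nat.factorial_le_pow ℓ
    have h2 : ℓ ^ ℓ ≤ (2 * ℓ) ^ ℓ := Nat.pow_le_pow_left (by omega) ℓ
    calc (Nat.factorial ℓ : ℝ) ≤ ((2 * ℓ) ^ ℓ : ℕ) := by exact_mod_cast h1.trans h2
      _ = (2 * ℓ : ℝ) ^ ℓ := by push_cast; ring
  have habsfac : |(Nat.factorial ℓ : ℝ)| = (Nat.factorial ℓ : ℝ) :=
    abs_of_nonneg (by positivity)
  rw [habsfac]
  have hmid : |∏ j ∈ Finset.univ.erase i, (v i - v j)⁻¹| *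
      |(∏ j ∈ Finset.univ.erase i, ((X : ℝ[X]) + C (j : ℝ))).coeff ℓ| ≤
      (Nat.factorial (2 * ℓ) : ℝ) := by
    calc |∏ j ∈ Finset.univ.erase i, (v i - v j)⁻¹| *
        |(∏ j ∈ Finset.univ.erase i, ((X : ℝ[X]) + C (j : ℝ))).coeff ℓ|
        ≤ 1 * (∏ j ∈ Finset.univ.erase i, ((j : ℝ) + 1)) :=
          mul_le_mul hcconst hcoeffb (abs_nonneg _) zero_le_one
      _ ≤ (Nat.factorial (2 * ℓ) : ℝ) := by linarith
  calc (Nat.factorial ℓ : ℝ) * (|∏ j ∈ Finset.univ.erase i, (v i - v j)⁻¹| *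
      |(∏ j ∈ Finset.univ.erase i, ((X : ℝ[X]) + C (j : ℝ))).coeff ℓ|)
      ≤ (2 * ℓ : ℝ) ^ ℓ * (Nat.factorial (2 * ℓ) : ℝ) := by
        refine mul_le_mul hfacℓ hmid ?_ (by positivity)
        positivity
    _ = (Nat.factorial (2 * ℓ) : ℝ) * (2 * ℓ : ℝ) ^ ℓ := by ring
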